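/- Under Assumption A1, for every λ ≥ 0 the dual function evaluates explicitly as θ(λ) = Σ_{e∈E} λ_e c_e + Σ_{s∈S} h_s(γ(s,λ)); consequently, for any subset T' ⊆ T containing at least one tree of every session, θ(λ) − θ'(λ) = Σ_{s∈S} (h_s(γ(s,λ)) − h_s(γ'(s,λ))). -/

import Mathlib

open scoped BigOperators

lemma dual_eval {S T E : Type} [Fintype S] [Fintype T] [Fintype E]
    [DecidableEq S] [DecidableEq T]
    (σ : T → S) (H : E → T → ℝ) (c : E → ℝ)
    (m M : S → ℝ) (hm : ∀ s, 0 ≤ m s)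
    (U : S → ℝ → ℝ)
    (P : T → Prop) [DecidablePred P]
    (Dp : Set ((S → ℝ) × (T → ℝ)))
    (hDp : Dp = {p | (∀ t, 0 ≤ p.2 t) ∧
      (∀ s, p.1 s = ∑ t, if σ t = s then p.2 t else 0) ∧
      (∀ s, p.1 s ∈ Set.Icc (m s) (M s)) ∧
      (∀ t, ¬ P t → p.2 t = 0)})
    (L : (S → ℝ) → (T → ℝ) → (E → ℝ) → ℝ)
    (hL : ∀ x y lam, L x y lam =
      ∑ s, U s (x s) + ∑ e, lam e * (c e - ∑ t, H e t * y t))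
    (lam : E → ℝ)
    (g : S → ℝ)
    (hg : ∀ s, IsLeast {w | ∃ t, P t ∧ σ t = s ∧ w = ∑ e, H e t * lam e} (g s))
    (xdag : S → ℝ → ℝ)
    (hxdag : ∀ (s : S) (w : ℝ), xdag s w ∈ Set.Icc (m s) (M s) ∧
      (∀ z ∈ Set.Icc (m s) (M s), U s z - w * z ≤ U s (xdag s w) - w * xdag s w))
    (Θv : ℝ) (hΘ : IsGreatest {v | ∃ p ∈ Dp, v = L p.1 p.2 lam} Θv) :
    Θv = ∑ e, lam e * c e + ∑ s, (U s (xdag s (g s)) - g s * xdag s (g s)) := by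
  obtain ⟨⟨p, hpD, hpv⟩, hub⟩ := hΘ
  rw [hDp] at hpD
  obtain ⟨hy0, hx, hIcc, hPz⟩ := hpD
  apply le_antisymm
  · -- upper bound
    rw [hpv, hL]
    have swap : ∑ e, lam e * ∑ t, H e t * p.2 t
        = ∑ t, p.2 t * ∑ e, H e t * lam e := by
      calc ∑ e, lam e * ∑ t, H e t * p.2 t
          = ∑ e, ∑ t, lam e * (H e t * p.2 t) := by simp [Finset.mul_sum]
        _ = ∑ t, ∑ e, lam e * (H e t * p.2 t) := Finset.sum_comm
        _ = ∑ t, p.2 t * ∑ e, H e t * lam e := by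
            refine Finset.sum_congr rfl fun t _ => ?_
            rw [Finset.mul_sum]
            exact Finset.sum_congr rfl fun e _ => by ring
    have lower : ∑ t, p.2 t * g (σ t) ≤ ∑ t, p.2 t * ∑ e, H e t * lam e := by
      refine Finset.sum_le_sum fun t _ => ?_
      by_cases hPt : P t
      · exact mul_le_mul_of_nonneg_left ((hg (σ t)).2 ⟨t, hPt, rfl, rfl⟩) (hy0 t)
      · simp [hPz t hPt]
    have group : ∑ t, p.2 t * g (σ t) = ∑ s, g s * p.1 s := by
      calc ∑ t, p.2 t * g (σ t)
          = ∑ t, ∑ s, if σ t = s then g s * p.2 t else 0 := by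
            refine Finset.sum_congr rfl fun t _ => ?_
            rw [Finset.sum_ite_eq]
            simp [mul_comm]
        _ = ∑ s, ∑ t, if σ t = s then g s * p.2 t else 0 := Finset.sum_comm
        _ = ∑ s, g s * p.1 s := by
            refine Finset.sum_congr rfl fun s _ => ?_
            rw [hx s, Finset.mul_sum]
            refine Finset.sum_congr rfl fun t _ => ?_
            split <;> simp
    have maxi : ∑ s, (U s (p.1 s) - g s * p.1 s)
        ≤ ∑ s, (U s (xdag s (g s)) - g s * xdag s (g s)) := by
      refine Finset.sum_le_sum fun s _ => (hxdag s (g s)).2 (p.1 s) (hIcc s)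
    have e1 : ∑ s, (U s (p.1 s) - g s * p.1 s)
        = ∑ s, U s (p.1 s) - ∑ s, g s * p.1 s := Finset.sum_sub_distrib _ _
    have e2 : ∑ s, (U s (xdag s (g s)) - g s * xdag s (g s))
        = ∑ s, U s (xdag s (g s)) - ∑ s, g s * xdag s (g s) := Finset.sum_sub_distrib _ _
    have e3 : ∑ e, lam e * (c e - ∑ t, H e t * p.2 t)
        = ∑ e, lam e * c e - ∑ e, lam e * ∑ t, H e t * p.2 t := by
      rw [← Finset.sum_sub_distrib]
      exact Finset.sum_congr rfl fun e _ => by ring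
    rw [e3, swap]
    linarith
  · -- achieved
    choose ts hPts hσts hcost using fun s => (hg s).1
    set xd : S → ℝ := fun s => xdag s (g s) with hxd
    refine hub ⟨(xd, fun t => ∑ s, if ts s = t then xd s else 0), ?_, ?_⟩
    · rw [hDp]
      refine ⟨fun t => ?_, fun s => ?_, fun s => (hxdag s (g s)).1, fun t hPt => ?_⟩
      · refine Finset.sum_nonneg fun s _ => ?_
        split
        · exact le_trans (hm s) (hxdag s (g s)).1.1
        · exact le_rfl
      · show xd s = ∑ t, if σ t = s then (∑ s', if ts s' = t then xd s' else 0) else 0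
        calc xd s
            = ∑ s', if s' = s then xd s' else 0 := by rw [Finset.sum_ite_eq']; simp
          _ = ∑ s', ∑ t, if ts s' = t then (if σ t = s then xd s' else 0) else 0 := by
              refine Finset.sum_congr rfl fun s' _ => ?_
              rw [Finset.sum_ite_eq]
              simp [hσts s']
          _ = ∑ t, ∑ s', if ts s' = t then (if σ t = s then xd s' else 0) else 0 :=
              Finset.sum_comm
          _ = ∑ t, if σ t = s then (∑ s', if ts s' = t then xd s' else 0) else 0 := by
              refine Finset.sum_congr rfl fun t _ => ?_
              by_cases h : σ t = s
              · simp [h]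
              · simp [h]
      · show (∑ s, if ts s = t then xd s else 0) = 0
        refine Finset.sum_eq_zero fun s _ => ?_
        have : ts s ≠ t := fun h => hPt (h ▸ hPts s)
        simp [this]
    · show _ = L xd (fun t => ∑ s, if ts s = t then xd s else 0) lam
      rw [hL]
      have key : ∀ e, ∑ t, H e t * ∑ s, (if ts s = t then xd s else 0)
          = ∑ s, H e (ts s) * xd s := by
        intro e
        calc ∑ t, H e t * ∑ s, (if ts s = t then xd s else 0)
            = ∑ t, ∑ s, (if ts s = t then H e t * xd s else 0) := by
              refine Finset.sum_congr rfl fun t _ => ?_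
              rw [Finset.mul_sum]
              exact Finset.sum_congr rfl fun s _ => by split <;> simp
          _ = ∑ s, ∑ t, (if ts s = t then H e t * xd s else 0) := Finset.sum_comm
          _ = ∑ s, H e (ts s) * xd s := by
              refine Finset.sum_congr rfl fun s _ => ?_
              rw [Finset.sum_ite_eq]
              simp
      have key2 : ∑ e, lam e * ∑ s, H e (ts s) * xd s = ∑ s, g s * xd s := by
        calc ∑ e, lam e * ∑ s, H e (ts s) * xd s
            = ∑ e, ∑ s, lam e * (H e (ts s) * xd s) := by simp [Finset.mul_sum]
          _ = ∑ s, ∑ e, lam e * (H e (ts s) * xd s) := Finset.sum_comm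
          _ = ∑ s, g s * xd s := by
              refine Finset.sum_congr rfl fun s _ => ?_
              rw [hcost s, Finset.sum_mul]
              exact Finset.sum_congr rfl fun e _ => by ring
      have e3 : ∑ e, lam e * (c e - ∑ t, H e t * ∑ s, (if ts s = t then xd s else 0))
          = ∑ e, lam e * c e - ∑ s, g s * xd s := by
        rw [← key2]
        rw [← Finset.sum_sub_distrib]
        refine Finset.sum_congr rfl fun e _ => ?_
        rw [key e]; ring
      have e2 : ∑ s, (U s (xd s) - g s * xd s)
          = ∑ s, U s (xd s) - ∑ s, g s * xd s := Finset.sum_sub_distrib _ _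
      simp only [hxd] at *
      rw [e3]
      linarith [e2]
theorem dual_function_explicit
    {S T E : Type} [Fintype S] [Fintype T] [Fintype E]
    [Nonempty S] [Nonempty T] [Nonempty E] [DecidableEq S] [DecidableEq T]
    (σ : T → S) (hσ : Function.Surjective σ)
    (H : E → T → ℝ) (hH : ∀ e t, H e t = 0 ∨ H e t = 1)
    (c : E → ℝ) (hc : ∀ e, 0 < c e)
    (m M : S → ℝ) (hm : ∀ s, 0 ≤ m s) (hmM : ∀ s, m s < M s)
    (U : S → ℝ → ℝ)
    -- Assumption A1
    (hUmono : ∀ s, MonotoneOn (U s) (Set.Icc (m s) (M s)))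
    (hUconc : ∀ s, StrictConcaveOn ℝ (Set.Icc (m s) (M s)) (U s))
    (hUdiff : ∀ s, ContDiffOn ℝ 1 (U s) (Set.Icc (m s) (M s)))
    -- the domain D
    (D : Set ((S → ℝ) × (T → ℝ)))
    (hD : D = {p | (∀ t, 0 ≤ p.2 t) ∧
      (∀ s, p.1 s = ∑ t, if σ t = s then p.2 t else 0) ∧
      (∀ s, p.1 s ∈ Set.Icc (m s) (M s))})
    -- the Lagrangian
    (L : (S → ℝ) → (T → ℝ) → (E → ℝ) → ℝ)
    (hL : ∀ x y lam, L x y lam =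
      ∑ s, U s (x s) + ∑ e, lam e * (c e - ∑ t, H e t * y t))
    -- the dual function
    (θ : (E → ℝ) → ℝ)
    (hθ : ∀ lam : E → ℝ, IsGreatest {v | ∃ p ∈ D, v = L p.1 p.2 lam} (θ lam))
    -- the minimum tree cost γ(s, λ)
    (γ : S → (E → ℝ) → ℝ)
    (hγ : ∀ s lam, IsLeast {w | ∃ t, σ t = s ∧ w = ∑ e, H e t * lam e} (γ s lam))
    -- x_s†(w) : the unique maximizer of x ↦ U_s(x) - w·x over [m_s, M_s]
    (xdag : S → ℝ → ℝ)
    (hxdag : ∀ (s : S) (w : ℝ), xdag s w ∈ Set.Icc (m s) (M s) ∧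
      (∀ z ∈ Set.Icc (m s) (M s), U s z - w * z ≤ U s (xdag s w) - w * xdag s w) ∧
      (∀ z ∈ Set.Icc (m s) (M s),
        U s z - w * z = U s (xdag s w) - w * xdag s w → z = xdag s w))
    -- the restricted tree set T', containing at least one tree of every session
    (T' : Finset T) (hT' : ∀ s, ∃ t ∈ T', σ t = s)
    -- the domain D' of the restricted master problem
    (D' : Set ((S → ℝ) × (T → ℝ)))
    (hD' : D' = {p | p ∈ D ∧ ∀ t ∉ T', p.2 t = 0})
    -- the dual function of the RMP
    (θ' : (E → ℝ) → ℝ)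
    (hθ' : ∀ lam : E → ℝ, IsGreatest {v | ∃ p ∈ D', v = L p.1 p.2 lam} (θ' lam))
    -- the local minimum tree cost
    (γ' : S → (E → ℝ) → ℝ)
    (hγ' : ∀ s lam,
      IsLeast {w | ∃ t ∈ T', σ t = s ∧ w = ∑ e, H e t * lam e} (γ' s lam)) :
    ∀ lam : E → ℝ, (∀ e, 0 ≤ lam e) →
      θ lam = ∑ e, lam e * c e +
        ∑ s, (U s (xdag s (γ s lam)) - γ s lam * xdag s (γ s lam)) ∧
      θ lam - θ' lam =
        ∑ s, ((U s (xdag s (γ s lam)) - γ s lam * xdag s (γ s lam)) -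
          (U s (xdag s (γ' s lam)) - γ' s lam * xdag s (γ' s lam))) := by

  intro lam _
  have hDfull : D = {p : (S → ℝ) × (T → ℝ) | (∀ t, 0 ≤ p.2 t) ∧
      (∀ s, p.1 s = ∑ t, if σ t = s then p.2 t else 0) ∧
      (∀ s, p.1 s ∈ Set.Icc (m s) (M s)) ∧
      (∀ t, ¬ (fun _ : T => True) t → p.2 t = 0)} := by
    rw [hD]; ext p; simp
  have hgfull : ∀ s, IsLeast
      {w | ∃ t, (fun _ : T => True) t ∧ σ t = s ∧ w = ∑ e, H e t * lam e} (γ s lam) := by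
    intro s
    have : {w | ∃ t, (fun _ : T => True) t ∧ σ t = s ∧ w = ∑ e, H e t * lam e}
        = {w | ∃ t, σ t = s ∧ w = ∑ e, H e t * lam e} := by ext w; simp
    rw [this]; exact hγ s lam
  have hA := dual_eval σ H c m M hm U (fun _ : T => True) D hDfull L hL lam
    (fun s => γ s lam) hgfull xdag
    (fun s w => ⟨(hxdag s w).1, (hxdag s w).2.1⟩) (θ lam) (hθ lam)
  have hDrest : D' = {p : (S → ℝ) × (T → ℝ) | (∀ t, 0 ≤ p.2 t) ∧
      (∀ s, p.1 s = ∑ t, if σ t = s then p.2 t else 0) ∧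
      (∀ s, p.1 s ∈ Set.Icc (m s) (M s)) ∧
      (∀ t, ¬ (fun t : T => t ∈ T') t → p.2 t = 0)} := by
    rw [hD', hD]; ext p; simp only [Set.mem_setOf_eq]; tauto
  have hB := dual_eval σ H c m M hm U (fun t : T => t ∈ T') D' hDrest L hL lam
    (fun s => γ' s lam) (fun s => hγ' s lam) xdag
    (fun s w => ⟨(hxdag s w).1, (hxdag s w).2.1⟩) (θ' lam) (hθ' lam)
  refine ⟨hA, ?_⟩
  have hd : (∑ s, ((U s (xdag s (γ s lam)) - γ s lam * xdag s (γ s lam)) -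
        (U s (xdag s (γ' s lam)) - γ' s lam * xdag s (γ' s lam))))
      = ∑ s, (U s (xdag s (γ s lam)) - γ s lam * xdag s (γ s lam)) -
        ∑ s, (U s (xdag s (γ' s lam)) - γ' s lam * xdag s (γ' s lam)) :=
    Finset.sum_sub_distrib _ _
  rw [hA, hB, hd]
  ring
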